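/- Every single big Sudoku constraint is redundant: for each of the 27 all_different constraints C (a row, column, or box constraint), any filling f : Fin 9 × Fin 9 → Fin 9 satisfying the other 26 constraints also satisfies C. -/
import Mathlib


inductive SudokuCon where
  | row (i : Fin 9)
  | col (j : Fin 9)
  | box (a b : Fin 3)

def SudokuCon.set : SudokuCon → Set (Fin 9 × Fin 9)
  | .row i => {p | p.1 = i}
  | .col j => {p | p.2 = j}
  | .box a b => {p | (p.1 : ℕ) / 3 = (a : ℕ) ∧ (p.2 : ℕ) / 3 = (b : ℕ)}

def sat (f : Fin 9 × Fin 9 → Fin 9) (c : SudokuCon) : Prop := Set.InjOn f c.set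

open Finset

def boxIdx (p : Fin 9 × Fin 9) : Fin 9 :=
  ⟨3 * ((p.1 : ℕ) / 3) + (p.2 : ℕ) / 3, by
    have h1 := p.1.isLt; have h2 := p.2.isLt; omega⟩

lemma countLem {s : Finset (Fin 9 × Fin 9)} {f : Fin 9 × Fin 9 → Fin 9}
    (hcard : s.card = 9) (hinj : Set.InjOn f ↑s) (v : Fin 9) :
    (s.filter (fun p => f p = v)).card = 1 := by
  have himg : s.image f = univ := by
    apply Finset.eq_univ_of_card
    rw [Finset.card_image_of_injOn hinj, hcard]; simp
  obtain ⟨p, hp, hfp⟩ := Finset.mem_image.mp (himg ▸ Finset.mem_univ v)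
  rw [Finset.card_eq_one]
  refine ⟨p, Finset.eq_singleton_iff_unique_mem.mpr
    ⟨Finset.mem_filter.mpr ⟨hp, hfp⟩, fun q hq => ?_⟩⟩
  obtain ⟨hq1, hq2⟩ := Finset.mem_filter.mp hq
  exact hinj hq1 hp (hq2.trans hfp.symm)

lemma injLem {s : Finset (Fin 9 × Fin 9)} {f : Fin 9 × Fin 9 → Fin 9}
    (h : ∀ v, (s.filter (fun p => f p = v)).card = 1) : Set.InjOn f ↑s := by
  intro p hp q hq hpq
  have h1 : p ∈ s.filter (fun x => f x = f q) := Finset.mem_filter.mpr ⟨hp, hpq⟩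
  have h2 : q ∈ s.filter (fun x => f x = f q) := Finset.mem_filter.mpr ⟨hq, rfl⟩
  exact Finset.card_le_one.mp (le_of_eq (h (f q))) _ h1 _ h2

lemma key (g h f : Fin 9 × Fin 9 → Fin 9) (k : Fin 9)
    (hg : ∀ j, (univ.filter (fun p => g p = j)).card = 9)
    (hh : ∀ j, (univ.filter (fun p => h p = j)).card = 9)
    (hgi : ∀ j, Set.InjOn f ↑(univ.filter (fun p => g p = j)))
    (hhi : ∀ j, j ≠ k → Set.InjOn f ↑(univ.filter (fun p => h p = j))) :
    Set.InjOn f ↑(univ.filter (fun p => h p = k)) := by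
  apply injLem
  intro v
  have comm : ∀ (m : Fin 9 × Fin 9 → Fin 9) (j : Fin 9),
      ((univ.filter (fun p => f p = v)).filter (fun p => m p = j))
        = ((univ.filter (fun p => m p = j)).filter (fun p => f p = v)) := by
    intro m j; ext p; simp [Finset.mem_filter]; tauto
  have sumg : (univ.filter (fun p => f p = v)).card
      = ∑ j : Fin 9, ((univ.filter (fun p => g p = j)).filter (fun p => f p = v)).card := by
    rw [Finset.card_eq_sum_card_fiberwise (f := g) (t := univ) (fun x _ => Finset.mem_univ _)]
    exact Finset.sum_congr rfl fun j _ => by rw [comm]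
  have sumh : (univ.filter (fun p => f p = v)).card
      = ∑ j : Fin 9, ((univ.filter (fun p => h p = j)).filter (fun p => f p = v)).card := by
    rw [Finset.card_eq_sum_card_fiberwise (f := h) (t := univ) (fun x _ => Finset.mem_univ _)]
    exact Finset.sum_congr rfl fun j _ => by rw [comm]
  have tot : (univ.filter (fun p => f p = v)).card = 9 := by
    rw [sumg]
    rw [Finset.sum_congr rfl fun j _ => countLem (hg j) (hgi j) v]
    simp
  have split : (9 : ℕ) = ((univ.filter (fun p => h p = k)).filter (fun p => f p = v)).card
      + ∑ j ∈ univ.erase k, ((univ.filter (fun p => h p = j)).filter (fun p => f p = v)).card := by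
    rw [← Finset.add_sum_erase _ _ (Finset.mem_univ k)] at sumh
    omega
  have erase8 : ∑ j ∈ univ.erase k,
      ((univ.filter (fun p => h p = j)).filter (fun p => f p = v)).card = 8 := by
    rw [Finset.sum_congr rfl fun j hj => countLem (hh j) (hhi j (Finset.mem_erase.mp hj).1) v]
    simp [Finset.card_erase_of_mem]
  omega

theorem every_single_big_constraint_redundant :
    ∀ C : SudokuCon, ∀ f : Fin 9 × Fin 9 → Fin 9,
      (∀ C' : SudokuCon, C' ≠ C → sat f C') → sat f C := by
  intro C f hf
  have cardfst : ∀ j : Fin 9, (univ.filter (fun p : Fin 9 × Fin 9 => p.1 = j)).card = 9 := by decide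
  have cardsnd : ∀ j : Fin 9, (univ.filter (fun p : Fin 9 × Fin 9 => p.2 = j)).card = 9 := by decide
  have cardbox : ∀ j : Fin 9, (univ.filter (fun p : Fin 9 × Fin 9 => boxIdx p = j)).card = 9 := by
    decide
  cases C with
  | row i =>
    have hset : (↑(univ.filter (fun p : Fin 9 × Fin 9 => p.1 = i)) : Set _)
        = (SudokuCon.row i).set := by ext p; simp [SudokuCon.set]
    rw [sat, ← hset]
    apply key (fun p => p.2) (fun p => p.1) f i cardsnd cardfst
    · intro j
      have := hf (.col j) (by simp)
      rw [sat] at this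
      convert this using 1
      ext p; simp [SudokuCon.set]
    · intro j hj
      have := hf (.row j) (by simpa using hj)
      rw [sat] at this
      convert this using 1
      ext p; simp [SudokuCon.set]
  | col i =>
    have hset : (↑(univ.filter (fun p : Fin 9 × Fin 9 => p.2 = i)) : Set _)
        = (SudokuCon.col i).set := by ext p; simp [SudokuCon.set]
    rw [sat, ← hset]
    apply key (fun p => p.1) (fun p => p.2) f i cardfst cardsnd
    · intro j
      have := hf (.row j) (by simp)
      rw [sat] at this
      convert this using 1
      ext p; simp [SudokuCon.set]
    · intro j hj
      have := hf (.col j) (by simpa using hj)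
      rw [sat] at this
      convert this using 1
      ext p; simp [SudokuCon.set]
  | box a b =>
    have hset : (↑(univ.filter (fun p : Fin 9 × Fin 9 => boxIdx p = ⟨3 * a + b, by omega⟩)) : Set _)
        = (SudokuCon.box a b).set := by
      ext p
      have h1 := p.1.isLt; have h2 := p.2.isLt
      have ha := a.isLt; have hb := b.isLt
      simp [SudokuCon.set, boxIdx, Fin.ext_iff]
      omega
    rw [sat, ← hset]
    apply key (fun p => p.1) boxIdx f _ cardfst cardbox
    · intro j
      have := hf (.row j) (by simp)
      rw [sat] at this
      convert this using 1
      ext p; simp [SudokuCon.set]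
    · intro j hj
      have hne : SudokuCon.box ⟨(j : ℕ) / 3, by omega⟩ ⟨(j : ℕ) % 3, by omega⟩
          ≠ SudokuCon.box a b := by
        intro hEq
        injection hEq with h1 h2
        apply hj
        have hj3 := j.isLt
        have ha := a.isLt; have hb := b.isLt
        rw [Fin.ext_iff] at h1 h2 ⊢
        simp at h1 h2 ⊢
        omega
      have := hf _ hne
      rw [sat] at this
      convert this using 1
      ext p
      have h1 := p.1.isLt; have h2 := p.2.isLt; have hj3 := j.isLt
      simp [SudokuCon.set, boxIdx, Fin.ext_iff]
      omega
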